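/- Suppose that for every subset A ⊆ X with |A| ≥ 2 and every finite multiset Q of ranges with |Q| = m, there exist two distinct elements x, y ∈ A such that at most f(|A|) ranges in Q cross the pair (x,y), where f is nonincreasing. Then there exists a spanning tree T on X (|X| = n) whose total crossing number (summed over all m ranges) is at most Σ_{k=2}^{n} f(k). -/

import Mathlib

open scoped Classical

private lemma crossPred {V : Type*} [DecidableEq V] (r : Finset V) (x y : V) :
    (∃ a b : V, s(x, y) = s(a, b) ∧ ((a ∈ r ∧ b ∉ r) ∨ (a ∉ r ∧ b ∈ r))) ↔
      ((x ∈ r ∧ y ∉ r) ∨ (x ∉ r ∧ y ∈ r)) := by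
  constructor
  · rintro ⟨a, b, hab, h⟩
    rw [Sym2.eq_iff] at hab
    rcases hab with ⟨rfl, rfl⟩ | ⟨rfl, rfl⟩
    · exact h
    · tauto
  · intro h; exact ⟨x, y, rfl, h⟩

private lemma sum_map_ite {α : Type*} (Q : Multiset α) (p : α → Prop) [DecidablePred p] :
    (Q.map (fun r => if p r then 1 else 0)).sum = Multiset.card (Q.filter p) := by
  induction Q using Multiset.induction with
  | empty => simp
  | cons a s ih => by_cases h : p a <;> simp [Multiset.filter_cons, h, ih] <;> omega

private lemma aux {V : Type*} [Fintype V] [DecidableEq V]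
    (Q : Multiset (Finset V)) (f : ℕ → ℕ)
    (hyp : ∀ A : Finset V, 2 ≤ A.card →
      ∃ x ∈ A, ∃ y ∈ A, x ≠ y ∧
        Multiset.card (Q.filter (fun r : Finset V =>
          (x ∈ r ∧ y ∉ r) ∨ (x ∉ r ∧ y ∈ r))) ≤ f A.card) :
    ∀ N : ℕ, ∀ A : Finset V, A.card = N → A.Nonempty →
      ∃ E : Finset (Sym2 V),
        (∀ e ∈ E, ∃ x ∈ A, ∃ y ∈ A, x ≠ y ∧ e = s(x, y)) ∧
        E.card = A.card - 1 ∧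
        (∀ a ∈ A, ∀ b ∈ A, (SimpleGraph.fromEdgeSet ↑E).Reachable a b) ∧
        (Q.map (fun r => (E.filter (fun e => ∃ x y : V, e = s(x, y) ∧
            ((x ∈ r ∧ y ∉ r) ∨ (x ∉ r ∧ y ∈ r)))).card)).sum
          ≤ ∑ k ∈ Finset.Icc 2 A.card, f k := by
  intro N
  induction N using Nat.strong_induction_on with
  | _ N ih =>
    intro A hcard hne
    by_cases h1 : A.card ≤ 1
    · -- base: singleton
      refine ⟨∅, by simp, by simp; omega, ?_, ?_⟩
      · intro a ha b hb
        have : a = b := by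
          have := Finset.card_le_one.mp h1 a ha b hb
          exact this
        exact this ▸ SimpleGraph.Reachable.refl _
      · simp only [Finset.filter_empty, Finset.card_empty]
        simp [Finset.Icc_eq_empty_of_lt (by omega : A.card < 2)]
    · push_neg at h1
      have h2 : 2 ≤ A.card := h1
      obtain ⟨x, hx, y, hy, hxy, hcross⟩ := hyp A h2
      set A' := A.erase x with hA'
      have hyA' : y ∈ A' := Finset.mem_erase.mpr ⟨hxy.symm, hy⟩
      have hcardA' : A'.card = A.card - 1 := Finset.card_erase_of_mem hx
      have hxA' : x ∉ A' := Finset.notMem_erase x A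
      obtain ⟨E', hE'mem, hE'card, hE'reach, hE'sum⟩ :=
        ih A'.card (by omega) A' rfl ⟨y, hyA'⟩
      have he0 : s(x, y) ∉ E' := by
        intro hmem
        obtain ⟨a, ha, b, hb, hab, heq⟩ := hE'mem _ hmem
        rw [Sym2.eq_iff] at heq
        rcases heq with ⟨rfl, rfl⟩ | ⟨rfl, rfl⟩ <;> exact hxA' ‹_›
      refine ⟨insert s(x, y) E', ?_, ?_, ?_, ?_⟩
      · intro e he
        rcases Finset.mem_insert.mp he with rfl | he
        · exact ⟨x, hx, y, hy, hxy, rfl⟩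
        · obtain ⟨a, ha, b, hb, hab, heq⟩ := hE'mem e he
          exact ⟨a, Finset.mem_of_mem_erase ha, b, Finset.mem_of_mem_erase hb, hab, heq⟩
      · rw [Finset.card_insert_of_notMem he0, hE'card]; omega
      · -- reachability
        have hmono : SimpleGraph.fromEdgeSet (↑E' : Set (Sym2 V)) ≤
            SimpleGraph.fromEdgeSet ↑(insert s(x, y) E') :=
          SimpleGraph.fromEdgeSet_mono (by
            exact_mod_cast Finset.coe_subset.mpr (Finset.subset_insert _ _))
        have hadj : (SimpleGraph.fromEdgeSet ↑(insert s(x, y) E')).Adj x y := by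
          rw [SimpleGraph.fromEdgeSet_adj]
          exact ⟨by simp, hxy⟩
        have key : ∀ a ∈ A, (SimpleGraph.fromEdgeSet ↑(insert s(x, y) E')).Reachable x a := by
          intro a ha
          by_cases hax : a = x
          · exact hax ▸ SimpleGraph.Reachable.refl _
          · have haA' : a ∈ A' := Finset.mem_erase.mpr ⟨hax, ha⟩
            exact hadj.reachable.trans ((hE'reach y hyA' a haA').mono hmono)
        intro a ha b hb
        exact (key a ha).symm.trans (key b hb)
      · -- sum bound
        have hsplit : ∀ r : Finset V,
            ((insert s(x, y) E').filter (fun e => ∃ a b : V, e = s(a, b) ∧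
              ((a ∈ r ∧ b ∉ r) ∨ (a ∉ r ∧ b ∈ r)))).card =
            (E'.filter (fun e => ∃ a b : V, e = s(a, b) ∧
              ((a ∈ r ∧ b ∉ r) ∨ (a ∉ r ∧ b ∈ r)))).card +
            (if ((x ∈ r ∧ y ∉ r) ∨ (x ∉ r ∧ y ∈ r)) then 1 else 0) := by
          intro r
          rw [Finset.filter_insert]
          by_cases hc : (x ∈ r ∧ y ∉ r) ∨ (x ∉ r ∧ y ∈ r)
          · rw [if_pos, if_pos hc, Finset.card_insert_of_notMem]
            · intro hmem; exact he0 (Finset.mem_of_mem_filter _ hmem)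
            · exact ⟨x, y, rfl, hc⟩
          · rw [if_neg, if_neg hc, Nat.add_zero]
            intro ⟨a, b, hab, h⟩
            exact hc ((crossPred r x y).mp ⟨a, b, hab, h⟩)
        calc (Q.map (fun r => ((insert s(x, y) E').filter (fun e => ∃ a b : V, e = s(a, b) ∧
              ((a ∈ r ∧ b ∉ r) ∨ (a ∉ r ∧ b ∈ r)))).card)).sum
            = (Q.map (fun r => (E'.filter (fun e => ∃ a b : V, e = s(a, b) ∧
                ((a ∈ r ∧ b ∉ r) ∨ (a ∉ r ∧ b ∈ r)))).card +
                (if ((x ∈ r ∧ y ∉ r) ∨ (x ∉ r ∧ y ∈ r)) then 1 else 0))).sum := by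
              congr 1; exact Multiset.map_congr rfl (fun r _ => hsplit r)
          _ = (Q.map (fun r => (E'.filter (fun e => ∃ a b : V, e = s(a, b) ∧
                ((a ∈ r ∧ b ∉ r) ∨ (a ∉ r ∧ b ∈ r)))).card)).sum +
              (Q.map (fun r => (if ((x ∈ r ∧ y ∉ r) ∨ (x ∉ r ∧ y ∈ r)) then 1 else 0))).sum := by
              rw [← Multiset.sum_map_add]
          _ ≤ (∑ k ∈ Finset.Icc 2 A'.card, f k) + f A.card := by
              gcongr
              rw [sum_map_ite]
              exact hcross
          _ = ∑ k ∈ Finset.Icc 2 A.card, f k := by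
              have : A.card = A'.card + 1 := by omega
              rw [this, Finset.sum_Icc_succ_top (by omega)]

/-- Greedy construction of a low-crossing spanning tree. If for
every subset `A` with `|A| ≥ 2` of a ground set `X` (with `|X| = n`) there are
two distinct elements `x, y ∈ A` crossed by at most `f(|A|)` of the `m` ranges
in the multiset `Q` (`f` nonincreasing), then there is a spanning tree on `X`
(a connected graph with `n - 1` edges) whose total crossing number, summed over
all ranges of `Q`, is at most `Σ_{k=2}^{n} f(k)`. -/
theorem stmt6
    (V : Type*) [Fintype V] [DecidableEq V]
    (n m : ℕ) (hn : Fintype.card V = n) (hn2 : 2 ≤ n)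
    (Q : Multiset (Finset V)) (hQ : Multiset.card Q = m)
    (f : ℕ → ℕ) (hf : Antitone f)
    (hyp : ∀ A : Finset V, 2 ≤ A.card →
      ∃ x ∈ A, ∃ y ∈ A, x ≠ y ∧
        Multiset.card (Q.filter (fun r : Finset V =>
          (x ∈ r ∧ y ∉ r) ∨ (x ∉ r ∧ y ∈ r))) ≤ f A.card) :
    ∃ G : SimpleGraph V, G.Connected ∧
      (Finset.univ.filter (fun e : Sym2 V => e ∈ G.edgeSet)).card = n - 1 ∧
      (Q.map (fun r : Finset V =>
        (Finset.univ.filter (fun e : Sym2 V => e ∈ G.edgeSet ∧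
          ∃ x y : V, e = s(x, y) ∧ ((x ∈ r ∧ y ∉ r) ∨ (x ∉ r ∧ y ∈ r)))).card)).sum
        ≤ ∑ k ∈ Finset.Icc 2 n, f k := by
  have hcardU : (Finset.univ : Finset V).card = n := by simpa using hn
  have hne : (Finset.univ : Finset V).Nonempty := by
    rw [← Finset.card_pos, hcardU]; omega
  obtain ⟨E, hEmem, hEcard, hEreach, hEsum⟩ :=
    aux Q f hyp (Finset.univ : Finset V).card Finset.univ rfl hne
  have hnodiag : ∀ e ∈ E, ¬ e.IsDiag := by
    intro e he
    obtain ⟨a, _, b, _, hab, rfl⟩ := hEmem e he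
    simpa using hab
  refine ⟨SimpleGraph.fromEdgeSet ↑E, ?_, ?_, ?_⟩
  · have : Nonempty V := Finset.Nonempty.to_type hne
    exact ⟨fun a b => hEreach a (Finset.mem_univ a) b (Finset.mem_univ b)⟩
  · have hset : (SimpleGraph.fromEdgeSet (↑E : Set (Sym2 V))).edgeSet = ↑E := by
      rw [SimpleGraph.edgeSet_fromEdgeSet]
      ext e
      simp only [Set.mem_diff, Finset.mem_coe, Set.mem_setOf_eq]
      exact ⟨fun h => h.1, fun h => ⟨h, hnodiag e h⟩⟩
    have : (Finset.univ.filter (fun e : Sym2 V =>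
        e ∈ (SimpleGraph.fromEdgeSet (↑E : Set (Sym2 V))).edgeSet)) = E := by
      ext e; simp [hset]
    convert (congrArg Finset.card this).trans (hEcard.trans (by rw [hcardU]))
  · have hset : (SimpleGraph.fromEdgeSet (↑E : Set (Sym2 V))).edgeSet = ↑E := by
      rw [SimpleGraph.edgeSet_fromEdgeSet]
      ext e
      simp only [Set.mem_diff, Finset.mem_coe, Set.mem_setOf_eq]
      exact ⟨fun h => h.1, fun h => ⟨h, hnodiag e h⟩⟩
    have heq : ∀ r : Finset V,
        (Finset.univ.filter (fun e : Sym2 V =>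
          e ∈ (SimpleGraph.fromEdgeSet (↑E : Set (Sym2 V))).edgeSet ∧
          ∃ x y : V, e = s(x, y) ∧ ((x ∈ r ∧ y ∉ r) ∨ (x ∉ r ∧ y ∈ r)))) =
        E.filter (fun e => ∃ x y : V, e = s(x, y) ∧
          ((x ∈ r ∧ y ∉ r) ∨ (x ∉ r ∧ y ∈ r))) := by
      intro r
      ext e
      simp [hset, Finset.mem_filter]
    calc _
        = (Q.map (fun r => (E.filter (fun e => ∃ x y : V, e = s(x, y) ∧
            ((x ∈ r ∧ y ∉ r) ∨ (x ∉ r ∧ y ∈ r)))).card)).sum := by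
          congr 1; exact Multiset.map_congr rfl (fun r _ => by convert congrArg Finset.card (heq r))
      _ ≤ ∑ k ∈ Finset.Icc 2 (Finset.univ : Finset V).card, f k := hEsum
      _ = ∑ k ∈ Finset.Icc 2 n, f k := by rw [hcardU]
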